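/- Let k and ℓ be integers with 0 < 2k − ℓ, and suppose n₀ := ℓ/(2k − ℓ) is an integer with n₀ ≥ 3. Then a multigraph on a vertex set V of cardinality n₀ is (k,ℓ)-tight if and only if it is the complete loopless multigraph K_{n₀}^{2k−ℓ}, i.e., it has no loops and every pair of distinct vertices of V is joined by exactly 2k − ℓ parallel edges. -/

import Mathlib

section AuxStmt3
open Finset

lemma card_filter_mem {V : Type*} [DecidableEq V] (E : Multiset (Sym2 V))
    (F : Finset (Sym2 V)) :
    (E.filter (fun e => e ∈ F)).card = ∑ a ∈ F, E.count a := by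
  classical
  rw [← Multiset.toFinset_sum_count_eq (E.filter (fun e => e ∈ F))]
  have hsub : (E.filter (fun e => e ∈ F)).toFinset ⊆ F := by
    intro a ha
    simp only [Multiset.mem_toFinset, Multiset.mem_filter] at ha
    exact ha.2
  rw [Finset.sum_subset hsub (fun a _ ha =>
    Multiset.count_eq_zero.mpr (fun hmem => ha (Multiset.mem_toFinset.mpr hmem)))]
  exact Finset.sum_congr rfl fun a ha => Multiset.count_filter_of_pos ha

lemma filter_diag_sym2 {V : Type*} [DecidableEq V] (S : Finset V) :
    S.sym2.filter (fun e => e.IsDiag) = S.image Sym2.diag := by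
  ext e
  induction e using Sym2.ind with
  | _ a b =>
    simp only [Finset.mem_filter, Finset.mk_mem_sym2_iff, Finset.mem_image, Sym2.mk_isDiag_iff]
    constructor
    · rintro ⟨⟨ha, hb⟩, rfl⟩; exact ⟨a, ha, rfl⟩
    · rintro ⟨v, hv, hve⟩
      rw [Sym2.diag] at hve
      obtain ⟨rfl, rfl⟩ | ⟨rfl, rfl⟩ := Sym2.eq_iff.mp hve
      · exact ⟨⟨hv, hv⟩, rfl⟩
      · exact ⟨⟨hv, hv⟩, rfl⟩

lemma card_filter_not_diag_sym2 {V : Type*} [DecidableEq V] (S : Finset V) :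
    (S.sym2.filter (fun e => ¬ e.IsDiag)).card = (S.card).choose 2 := by
  have h1 := Finset.card_filter_add_card_filter_not
    (s := S.sym2) (p := fun e => e.IsDiag)
  rw [filter_diag_sym2, Finset.card_image_of_injective _ Sym2.diag_injective,
    Finset.card_sym2, Nat.choose_succ_succ'] at h1
  norm_num [Nat.choose_one_right] at h1
  omega

lemma two_mul_choose_two (n : ℕ) : 2 * n.choose 2 = n * (n - 1) := by
  induction n with
  | zero => rfl
  | succ j ih =>
    rw [Nat.choose_succ_succ', Nat.choose_one_right]
    cases j with
    | zero => rfl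
    | succ i =>
      simp only [Nat.succ_sub_one] at *
      ring_nf
      ring_nf at ih
      omega


end AuxStmt3



/-- The number of edges of the multiset `E` (counted with multiplicity)
whose endpoints both lie in the vertex subset `S`. -/
def spanCount {V : Type*} [DecidableEq V] (E : Multiset (Sym2 V)) (S : Finset V) : ℕ :=
  (E.filter (fun e => e ∈ S.sym2)).card

/-- A multigraph on the finite vertex type `V` with edge multiset `E` is
`(k,ℓ)`-sparse if every subset `S` of vertices spans at most `max 0 (k|S| - ℓ)` edges. -/
def Sparse {V : Type*} [Fintype V] [DecidableEq V] (k l : ℤ) (E : Multiset (Sym2 V)) : Prop :=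
  ∀ S : Finset V, (spanCount E S : ℤ) ≤ max 0 (k * S.card - l)

/-- A multigraph is `(k,ℓ)`-tight if it is `(k,ℓ)`-sparse and has exactly `k|V| - ℓ` edges. -/
def Tight {V : Type*} [Fintype V] [DecidableEq V] (k l : ℤ) (E : Multiset (Sym2 V)) : Prop :=
  Sparse k l E ∧ (Multiset.card E : ℤ) = k * (Fintype.card V) - l

/-- If `2k - ℓ > 0` and `n₀ := ℓ/(2k-ℓ)` is an integer with `n₀ ≥ 3`, then a multigraph on
`n₀` vertices is `(k,ℓ)`-tight iff it is the complete loopless multigraph `K_{n₀}^{2k-ℓ}`: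
no loops, and every pair of distinct vertices is joined by exactly `2k - ℓ` parallel edges. -/
lemma spanCount_eq_sum {V : Type*} [DecidableEq V] (E : Multiset (Sym2 V)) (S : Finset V) :
    spanCount E S = ∑ e ∈ S.sym2, E.count e :=
  card_filter_mem E S.sym2

theorem stmt3 (k l n₀ : ℤ) (hpos : 0 < 2 * k - l) (hint : l = n₀ * (2 * k - l))
    (hn : 3 ≤ n₀) (V : Type*) [Fintype V] [DecidableEq V]
    (hcard : (Fintype.card V : ℤ) = n₀) (E : Multiset (Sym2 V)) :
    Tight k l E ↔
      ((∀ v : V, s(v, v) ∉ E) ∧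
        ∀ u v : V, u ≠ v → (E.count s(u, v) : ℤ) = 2 * k - l) := by
  classical
  set nV := Fintype.card V with hnV
  have hnV3 : 3 ≤ nV := by exact_mod_cast hcard ▸ hn
  -- cardinality of non-diagonal elements of `Sym2 V`
  have hNcard : ((Finset.univ : Finset (Sym2 V)).filter (fun e => ¬ e.IsDiag)).card
      = nV.choose 2 := by
    have h := card_filter_not_diag_sym2 (Finset.univ : Finset V)
    rwa [Finset.sym2_univ, Finset.card_univ] at h
  -- total edge count as a sum over all sym2 elements
  have hsum_univ : (Multiset.card E) = ∑ e ∈ (Finset.univ : Finset (Sym2 V)), E.count e := by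
    rw [← card_filter_mem E Finset.univ,
      Multiset.filter_eq_self.mpr (fun a _ => Finset.mem_univ a)]
  -- choose arithmetic
  have hch : ((nV.choose 2 : ℕ) : ℤ) * 2 = (nV : ℤ) * ((nV : ℤ) - 1) := by
    have h := two_mul_choose_two nV
    have h1 : (1:ℕ) ≤ nV := by omega
    zify [h1] at h
    linarith
  rw [hcard] at hch
  have harith : k * n₀ - l = ((nV.choose 2 : ℕ) : ℤ) * (2 * k - l) := by
    have h2 : 2 * (k * n₀ - l) = 2 * (((nV.choose 2 : ℕ) : ℤ) * (2 * k - l)) := by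
      linear_combination (n₀ - 2) * hint - (2 * k - l) * hch
    linarith
  constructor
  · rintro ⟨hsp, hc⟩
    -- no loops
    have hloop : ∀ v : V, s(v, v) ∉ E := by
      intro v hv
      have h := hsp {v}
      have h0 : (0:ℤ) < (spanCount E {v} : ℤ) := by
        have hmem : s(v, v) ∈ E.filter (fun e => e ∈ ({v} : Finset V).sym2) :=
          Multiset.mem_filter.mpr ⟨hv, by simp [Finset.mk_mem_sym2_iff, Sym2.diag]⟩
        have hp : 0 < spanCount E {v} := by
          rw [spanCount, Multiset.card_pos]
          intro h0
          rw [h0] at hmem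
          exact Multiset.notMem_zero _ hmem
        exact_mod_cast hp
      simp only [Finset.card_singleton, Nat.cast_one, mul_one] at h
      have hkl : k - l ≤ 0 := by nlinarith [mul_pos hpos (show (0:ℤ) < n₀ - 1 by linarith)]
      rw [max_eq_left hkl] at h
      linarith
    -- each pair spans at most `2k - l` edges
    have hle : ∀ u v : V, u ≠ v → (E.count s(u, v) : ℤ) ≤ 2 * k - l := by
      intro u v huv
      have h := hsp {u, v}
      have hsub : E.count s(u, v) ≤ spanCount E {u, v} := by
        rw [Multiset.count_eq_card_filter_eq]
        apply Multiset.card_le_card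
        apply Multiset.monotone_filter_right
        intro e he
        rw [← he]
        simp [Finset.mk_mem_sym2_iff]
      rw [Finset.card_pair huv] at h
      push_cast at h
      rw [max_eq_right (by linarith : (0:ℤ) ≤ k * 2 - l)] at h
      calc (E.count s(u, v) : ℤ) ≤ (spanCount E {u, v} : ℤ) := by exact_mod_cast hsub
        _ ≤ k * 2 - l := h
        _ = 2 * k - l := by ring
    -- sum over non-diagonal elements
    have hdiag0 : ∑ e ∈ Finset.univ.filter (fun e : Sym2 V => e.IsDiag), E.count e = 0 := by
      apply Finset.sum_eq_zero
      intro e he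
      obtain ⟨a, rfl⟩ := (show e.IsDiag ↔ e ∈ Set.range Sym2.diag by rw [Sym2.range_diag, Sym2.mem_diagSet]).mp (Finset.mem_filter.mp he).2
      exact Multiset.count_eq_zero.mpr (hloop a)
    have hsumN : ∑ e ∈ Finset.univ.filter (fun e : Sym2 V => ¬ e.IsDiag), (E.count e : ℤ)
        = k * n₀ - l := by
      have h := hsum_univ
      rw [← Finset.sum_filter_add_sum_filter_not Finset.univ (fun e : Sym2 V => e.IsDiag)
        (fun e => E.count e), hdiag0, zero_add] at h
      have h2 : ((Multiset.card E : ℕ) : ℤ)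
          = ∑ e ∈ Finset.univ.filter (fun e : Sym2 V => ¬ e.IsDiag), (E.count e : ℤ) := by
        rw [h]; push_cast; rfl
      rw [← h2, hc, hcard]
    have hle' : ∀ e ∈ Finset.univ.filter (fun e : Sym2 V => ¬ e.IsDiag),
        (E.count e : ℤ) ≤ 2 * k - l := by
      intro e he
      induction e using Sym2.ind with
      | _ u v =>
        have huv : u ≠ v := by simpa [Sym2.mk_isDiag_iff] using (Finset.mem_filter.mp he).2
        exact hle u v huv
    have hall : ∀ e ∈ Finset.univ.filter (fun e : Sym2 V => ¬ e.IsDiag),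
        (E.count e : ℤ) = 2 * k - l := by
      apply (Finset.sum_eq_sum_iff_of_le hle').mp
      rw [hsumN, Finset.sum_const, hNcard, nsmul_eq_mul]
      exact harith
    refine ⟨hloop, fun u v huv => ?_⟩
    exact hall s(u, v) (by simp [Finset.mem_filter, Sym2.mk_isDiag_iff, huv])
  · rintro ⟨hloop, hcnt⟩
    have hcnt' : ∀ e : Sym2 V, ¬ e.IsDiag → (E.count e : ℤ) = 2 * k - l := by
      intro e
      induction e using Sym2.ind with
      | _ u v => exact fun hne => hcnt u v (by simpa [Sym2.mk_isDiag_iff] using hne)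
    have hspanS : ∀ S : Finset V,
        (spanCount E S : ℤ) = ((S.card.choose 2 : ℕ) : ℤ) * (2 * k - l) := by
      intro S
      rw [spanCount_eq_sum]
      push_cast
      rw [← Finset.sum_filter_add_sum_filter_not S.sym2 (fun e : Sym2 V => e.IsDiag)
        (fun e => (E.count e : ℤ))]
      have hd : ∑ e ∈ S.sym2.filter (fun e : Sym2 V => e.IsDiag), (E.count e : ℤ) = 0 := by
        apply Finset.sum_eq_zero
        intro e he
        obtain ⟨a, rfl⟩ := (show e.IsDiag ↔ e ∈ Set.range Sym2.diag by rw [Sym2.range_diag, Sym2.mem_diagSet]).mp (Finset.mem_filter.mp he).2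
        exact_mod_cast congrArg (Nat.cast : ℕ → ℤ) (Multiset.count_eq_zero.mpr (hloop a))
      have hnd : ∑ e ∈ S.sym2.filter (fun e : Sym2 V => ¬ e.IsDiag), (E.count e : ℤ)
          = ((S.card.choose 2 : ℕ) : ℤ) * (2 * k - l) := by
        rw [Finset.sum_congr rfl (fun e he => hcnt' e (Finset.mem_filter.mp he).2),
          Finset.sum_const, card_filter_not_diag_sym2, nsmul_eq_mul]
      rw [hd, hnd, zero_add]
    constructor
    · intro S
      rw [hspanS S]
      rcases le_or_gt S.card 1 with hs | hs
      · rw [Nat.choose_eq_zero_of_lt (by omega)]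
        simp only [Nat.cast_zero, zero_mul]
        exact le_max_left _ _
      · have hs2 : (2:ℤ) ≤ (S.card : ℤ) := by exact_mod_cast hs
        have hsle : ((S.card : ℕ) : ℤ) ≤ n₀ := by
          rw [← hcard]; exact_mod_cast Finset.card_le_univ S
        have hchs : ((S.card.choose 2 : ℕ) : ℤ) * 2 = (S.card : ℤ) * ((S.card : ℤ) - 1) := by
          have h := two_mul_choose_two S.card
          zify [show 1 ≤ S.card by omega] at h
          linarith
        refine le_trans ?_ (le_max_right _ _)
        have key : 0 ≤ (2 * k - l) * ((S.card : ℤ) - 2) * (n₀ - (S.card : ℤ)) :=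
          mul_nonneg (mul_nonneg hpos.le (by linarith)) (by linarith)
        have hiden : 2 * (k * (S.card : ℤ) - l)
            - 2 * (((S.card.choose 2 : ℕ) : ℤ) * (2 * k - l))
            = (2 * k - l) * ((S.card : ℤ) - 2) * (n₀ - (S.card : ℤ)) := by
          linear_combination ((S.card : ℤ) - 2) * hint - (2 * k - l) * hchs
        linarith
    · have h := hspanS Finset.univ
      have heq : spanCount E Finset.univ = Multiset.card E := by
        rw [spanCount, Multiset.filter_eq_self.mpr]
        intro a _
        simp [Finset.sym2_univ]
      rw [heq, Finset.card_univ] at h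
      rw [h, hcard, ← hnV]
      exact harith.symm
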